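/- Let (X, d) be a metric space of individuals, Y a finite set of outcomes, u : X × Y → [0,1] a utility function that is L-Lipschitz in its first argument (for every y ∈ Y and x, x′ ∈ X, |u(x,y) − u(x′,y)| ≤ L·d(x,x′)), and P a probability distribution on X. Let S ⊆ X be a finite set of individuals such that there exists a measurable subset X̂ ⊆ X with P(X̂) ≥ 1 − α and d(x, NN_S(x)) ≤ β/(2L) for every x ∈ X̂, where NN_S(x) denotes a nearest neighbor of x in S under d. Then for every classifier h : S → Δ(Y) that is envy free on S, the extension h̄ : X → Δ(Y) defined by h̄(x) = h(NN_S(x)) is (α, β)-envy free with respect to P. -/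

import Mathlib

open MeasureTheory

/-- Expected utility of individual `x` for a distribution `p` over outcomes:
`u(x,p) = E_{y ∼ p}[u(x,y)]`. -/
noncomputable def expUtil {X Y : Type*} [Fintype Y] (u : X → Y → ℝ) (x : X) (p : Y → ℝ) : ℝ :=
  ∑ y, p y * u x y

lemma expUtil_lip {X Y : Type*} [MetricSpace X] [Fintype Y] (u : X → Y → ℝ)
    (L : ℝ) (hLip : ∀ y : Y, ∀ x x' : X, |u x y - u x' y| ≤ L * dist x x')
    (p : Y → ℝ) (hp : p ∈ stdSimplex ℝ Y) (x x' : X) :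
    |expUtil u x p - expUtil u x' p| ≤ L * dist x x' := by
  have : expUtil u x p - expUtil u x' p = ∑ y, p y * (u x y - u x' y) := by
    simp [expUtil, Finset.sum_sub_distrib, mul_sub]
  rw [this]
  calc |∑ y, p y * (u x y - u x' y)| ≤ ∑ y, |p y * (u x y - u x' y)| :=
        Finset.abs_sum_le_sum_abs _ _
    _ ≤ ∑ y, p y * (L * dist x x') := by
        apply Finset.sum_le_sum
        intro y _
        rw [abs_mul, abs_of_nonneg (hp.1 y)]
        exact mul_le_mul_of_nonneg_left (hLip y x x') (hp.1 y)
    _ = L * dist x x' := by rw [← Finset.sum_mul, hp.2, one_mul]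

/-- If `S` is such that some set `X̂` of probability mass at least `1 - α`
consists of individuals whose nearest neighbor in `S` is within distance `β / (2L)`, then the
nearest-neighbor extension of any classifier that is envy free on `S` is `(α, β)`-EF w.r.t. `P`. -/
theorem stmt0 {X Y : Type*} [MetricSpace X] [MeasurableSpace X] [Fintype Y]
    (u : X → Y → ℝ) (hu01 : ∀ x y, u x y ∈ Set.Icc (0 : ℝ) 1)
    (L : ℝ) (hL : 0 < L)
    (hLip : ∀ y : Y, ∀ x x' : X, |u x y - u x' y| ≤ L * dist x x')
    (P : Measure X) [IsProbabilityMeasure P]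
    (α β : ℝ)
    (S : Finset X) (NN : X → X)
    (hNNmem : ∀ x, NN x ∈ S)
    (hNNnear : ∀ x, ∀ x' ∈ S, dist x (NN x) ≤ dist x x')
    (Xhat : Set X) (hXhatMeas : MeasurableSet Xhat)
    (hXhatP : ENNReal.ofReal (1 - α) ≤ P Xhat)
    (hXhatNN : ∀ x ∈ Xhat, dist x (NN x) ≤ β / (2 * L))
    (h : X → Y → ℝ) (hsimplex : ∀ x, h x ∈ stdSimplex ℝ Y)
    (hEF : ∀ x ∈ S, ∀ x' ∈ S, expUtil u x (h x') ≤ expUtil u x (h x)) :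
    (P.prod P) {p : X × X |
        expUtil u p.1 (h (NN p.1)) < expUtil u p.1 (h (NN p.2)) - β}
      ≤ ENNReal.ofReal α := by
  have hsub : {p : X × X |
        expUtil u p.1 (h (NN p.1)) < expUtil u p.1 (h (NN p.2)) - β}
      ⊆ Xhatᶜ ×ˢ Set.univ := by
    rintro ⟨x, x'⟩ hbad
    simp only [Set.mem_setOf_eq] at hbad
    constructor
    swap
    · trivial
    · intro hx
      have hd : L * dist x (NN x) ≤ β / 2 := by
        have := hXhatNN x hx
        have h2L : (0:ℝ) < 2 * L := by linarith
        calc L * dist x (NN x) ≤ L * (β / (2 * L)) :=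
              mul_le_mul_of_nonneg_left this hL.le
          _ = β / 2 := by field_simp
      have hEFpt := hEF (NN x) (hNNmem x) (NN x') (hNNmem x')
      have h1 := abs_le.1 (expUtil_lip u L hLip (h (NN x')) (hsimplex (NN x')) x (NN x))
      have h2 := abs_le.1 (expUtil_lip u L hLip (h (NN x)) (hsimplex (NN x)) x (NN x))
      -- chain: expUtil x (h (NN x')) ≤ expUtil (NN x) (h (NN x')) + β/2
      --        ≤ expUtil (NN x) (h (NN x)) + β/2 ≤ expUtil x (h (NN x)) + β
      have : expUtil u x (h (NN x')) - β ≤ expUtil u x (h (NN x)) := by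
        have e1 : expUtil u x (h (NN x')) ≤ expUtil u (NN x) (h (NN x')) + β / 2 := by
          have := h1.2; linarith
        have e2 : expUtil u (NN x) (h (NN x)) ≤ expUtil u x (h (NN x)) + β / 2 := by
          have := h2.1; linarith
        linarith
      linarith [hbad, this]
  calc (P.prod P) {p : X × X |
        expUtil u p.1 (h (NN p.1)) < expUtil u p.1 (h (NN p.2)) - β}
      ≤ (P.prod P) (Xhatᶜ ×ˢ Set.univ) := measure_mono hsub
    _ = P Xhatᶜ * P Set.univ := Measure.prod_prod _ _
    _ = P Xhatᶜ := by simp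
    _ = 1 - P Xhat := by
        rw [measure_compl hXhatMeas (measure_ne_top P Xhat)]; simp
    _ ≤ 1 - ENNReal.ofReal (1 - α) := tsub_le_tsub_left hXhatP 1
    _ ≤ ENNReal.ofReal α := by
        rw [tsub_le_iff_right]
        calc (1 : ENNReal) = ENNReal.ofReal (α + (1 - α)) := by norm_num
          _ ≤ ENNReal.ofReal α + ENNReal.ofReal (1 - α) := ENNReal.ofReal_add_le
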